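/- arXiv:2512.06522 — 2 statements merged into one kernel-verified Lean document; each statement's English description precedes it below -/
import Mathlib

section
/- For every matrix X ∈ ℝ^{n×p}, the between-cluster sum of squares identity holds: ‖B X‖_F² = (|C1|·|C2| / N) · ‖X̄_{C1} − X̄_{C2}‖₂². -/
open Matrix
open scoped BigOperators

noncomputable def nuVec {n : ℕ} (C1 C2 : Finset (Fin n)) : Fin n → ℝ :=
  fun i => (if i ∈ C1 then ((C1.card : ℝ))⁻¹ else 0) - (if i ∈ C2 then ((C2.card : ℝ))⁻¹ else 0)

noncomputable def projB {n : ℕ} (C1 C2 : Finset (Fin n)) : Matrix (Fin n) (Fin n) ℝ :=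
  (∑ i, nuVec C1 C2 i ^ 2)⁻¹ • Matrix.vecMulVec (nuVec C1 C2) (nuVec C1 C2)

def indVec {n : ℕ} (C : Finset (Fin n)) : Fin n → ℝ := fun i => if i ∈ C then 1 else 0

noncomputable def centerProj {n : ℕ} (C : Finset (Fin n)) : Matrix (Fin n) (Fin n) ℝ :=
  Matrix.diagonal (indVec C) - ((C.card : ℝ))⁻¹ • Matrix.vecMulVec (indVec C) (indVec C)

noncomputable def projW {n : ℕ} (C1 C2 : Finset (Fin n)) : Matrix (Fin n) (Fin n) ℝ :=
  centerProj C1 + centerProj C2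

def frobSq {n p : ℕ} (X : Matrix (Fin n) (Fin p) ℝ) : ℝ := ∑ i, ∑ j, X i j ^ 2

noncomputable def clusterMean {n p : ℕ} (C : Finset (Fin n)) (X : Matrix (Fin n) (Fin p) ℝ) :
    Fin p → ℝ :=
  fun j => (∑ i ∈ C, X i j) / C.card

/-- Between-cluster sum of squares identity:
`‖B X‖_F² = (|C1|·|C2|/N) · ‖X̄_{C1} − X̄_{C2}‖₂²`. -/
theorem stmt4 {n p : ℕ} (hn : 1 ≤ n) (hp : 1 ≤ p) (C1 C2 : Finset (Fin n))
    (h1 : C1.Nonempty) (h2 : C2.Nonempty) (hdisj : Disjoint C1 C2)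
    (X : Matrix (Fin n) (Fin p) ℝ) :
    frobSq (projB C1 C2 * X) =
      ((C1.card : ℝ) * (C2.card : ℝ) / ((C1.card : ℝ) + (C2.card : ℝ))) *
        ∑ j, (clusterMean C1 X j - clusterMean C2 X j) ^ 2 := by
  classical
  set ν := nuVec C1 C2 with hν
  have hc1 : (0:ℝ) < C1.card := by exact_mod_cast Finset.card_pos.mpr h1
  have hc2 : (0:ℝ) < C2.card := by exact_mod_cast Finset.card_pos.mpr h2
  set s := ∑ i, ν i ^ 2 with hsdef
  set d : Fin p → ℝ := fun j => clusterMean C1 X j - clusterMean C2 X j with hddef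
  have hs : s = (C1.card:ℝ)⁻¹ + (C2.card:ℝ)⁻¹ := by
    have hsq : ∀ i, ν i ^ 2 =
        (if i ∈ C1 then ((C1.card:ℝ)⁻¹)^2 else 0) + (if i ∈ C2 then ((C2.card:ℝ)⁻¹)^2 else 0) := by
      intro i
      by_cases h1i : i ∈ C1
      · have h2i : i ∉ C2 := Finset.disjoint_left.mp hdisj h1i
        simp [hν, nuVec, h1i, h2i]
      · by_cases h2i : i ∈ C2 <;> simp [hν, nuVec, h1i, h2i]
    rw [hsdef, Finset.sum_congr rfl (fun i _ => hsq i), Finset.sum_add_distrib,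
      Finset.sum_ite_mem, Finset.sum_ite_mem, Finset.univ_inter, Finset.univ_inter,
      Finset.sum_const, Finset.sum_const, nsmul_eq_mul, nsmul_eq_mul]
    field_simp
  have hd : ∀ j, (∑ i, ν i * X i j) = d j := by
    intro j
    simp only [hν, nuVec, sub_mul, ite_mul, zero_mul]
    rw [Finset.sum_sub_distrib, Finset.sum_ite_mem, Finset.sum_ite_mem,
      Finset.univ_inter, Finset.univ_inter, ← Finset.mul_sum, ← Finset.mul_sum]
    simp [hddef, clusterMean, div_eq_inv_mul]
  have hentry : ∀ i j, (projB C1 C2 * X) i j = s⁻¹ * ν i * d j := by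
    intro i j
    rw [← hd j]
    simp only [projB, Matrix.mul_apply, Matrix.smul_apply, Matrix.vecMulVec_apply, smul_eq_mul,
      ← hν, ← hsdef, Finset.mul_sum]
    apply Finset.sum_congr rfl
    intro k _
    ring
  have hs0 : s ≠ 0 := by
    rw [hs]; positivity
  have expand : frobSq (projB C1 C2 * X) = s⁻¹^2 * (s * (∑ j, d j ^ 2)) := by
    unfold frobSq
    simp only [hentry]
    rw [hsdef, Finset.sum_mul_sum, Finset.mul_sum]
    apply Finset.sum_congr rfl
    intro i _
    rw [Finset.mul_sum]
    apply Finset.sum_congr rfl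
    intro j _
    ring
  rw [expand]
  have : s⁻¹^2 * (s * (∑ j, d j ^ 2)) = s⁻¹ * (∑ j, d j ^ 2) := by
    field_simp
  rw [this, hs]
  have hne : (C1.card:ℝ) + C2.card ≠ 0 := by positivity
  rw [show ((C1.card:ℝ)⁻¹ + (C2.card:ℝ)⁻¹)⁻¹ = (C1.card:ℝ) * C2.card / ((C1.card:ℝ) + C2.card) by
    field_simp; ring]
end

section
/- Reconstruction of the data from the test statistic and auxiliary statistics: let X ∈ ℝ^{n×p} satisfy B X ≠ 0 and W X ≠ 0. Define R = (N − 2) · ‖B X‖_F² / ‖W X‖_F², η = B X / ‖B X‖_F, γ = W X / ‖W X‖_F, Δ = ‖B X‖_F² + ‖W X‖_F², and Γ = (I_n − B − W) X. Then √Δ · ( η · √(R / (N − 2 + R)) + γ · √((N − 2) / (N − 2 + R)) ) + Γ = X. -/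
open Matrix
open scoped BigOperators

lemma frobSq_pos {n p : ℕ} {M : Matrix (Fin n) (Fin p) ℝ} (h : M ≠ 0) : 0 < frobSq M := by
  obtain ⟨i, j, hij⟩ : ∃ i j, M i j ≠ 0 := by
    by_contra hc
    push_neg at hc
    exact h (by ext i j; simp [hc i j])
  have h1 : 0 < ∑ j', M i j' ^ 2 :=
    Finset.sum_pos' (fun k _ => sq_nonneg _)
      ⟨j, Finset.mem_univ j, lt_of_le_of_ne (sq_nonneg _) (Ne.symm (pow_ne_zero 2 hij))⟩
  exact Finset.sum_pos' (fun k _ => Finset.sum_nonneg fun l _ => sq_nonneg _)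
    ⟨i, Finset.mem_univ i, h1⟩

lemma centerProj_singleton {n : ℕ} (i : Fin n) : centerProj ({i} : Finset (Fin n)) = 0 := by
  ext j k
  simp only [centerProj, indVec, Matrix.sub_apply, Matrix.diagonal_apply,
    Matrix.smul_apply, Matrix.vecMulVec_apply, Finset.card_singleton, Nat.cast_one, inv_one,
    one_smul, smul_eq_mul, Matrix.zero_apply, Finset.mem_singleton]
  by_cases hj : j = i <;> by_cases hk : k = i <;> by_cases hjk : j = k <;>
    simp_all

/-- paper's Lemma 2. Reconstruction of the data matrix from the F-type test
statistic `R` and the auxiliary statistics `(η, γ, Δ, Γ)`: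
`√Δ · (η·√(R/(N−2+R)) + γ·√((N−2)/(N−2+R))) + Γ = X`. -/
theorem stmt9 {n p : ℕ} (hn : 1 ≤ n) (hp : 1 ≤ p) (C1 C2 : Finset (Fin n))
    (h1 : C1.Nonempty) (h2 : C2.Nonempty) (hdisj : Disjoint C1 C2)
    (X : Matrix (Fin n) (Fin p) ℝ)
    (hB : projB C1 C2 * X ≠ 0) (hW : projW C1 C2 * X ≠ 0)
    (N R Δ : ℝ) (η γ Γ : Matrix (Fin n) (Fin p) ℝ)
    (hN : N = (C1.card : ℝ) + (C2.card : ℝ))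
    (hR : R = (N - 2) * frobSq (projB C1 C2 * X) / frobSq (projW C1 C2 * X))
    (hη : η = (Real.sqrt (frobSq (projB C1 C2 * X)))⁻¹ • (projB C1 C2 * X))
    (hγ : γ = (Real.sqrt (frobSq (projW C1 C2 * X)))⁻¹ • (projW C1 C2 * X))
    (hΔ : Δ = frobSq (projB C1 C2 * X) + frobSq (projW C1 C2 * X))
    (hΓ : Γ = (1 - projB C1 C2 - projW C1 C2) * X) :
    Real.sqrt Δ •
        (Real.sqrt (R / (N - 2 + R)) • η + Real.sqrt ((N - 2) / (N - 2 + R)) • γ) + Γ = X := by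
  set MB := projB C1 C2 * X with hMB
  set MW := projW C1 C2 * X with hMW
  set a := frobSq MB with haa
  set b := frobSq MW with hbb
  have ha : 0 < a := frobSq_pos hB
  have hb : 0 < b := frobSq_pos hW
  have hab : 0 < a + b := by linarith
  have hcard : 3 ≤ C1.card + C2.card := by
    by_contra hc
    push_neg at hc
    have hc1 : C1.card = 1 := by
      have := h1.card_pos; have := h2.card_pos; omega
    have hc2 : C2.card = 1 := by
      have := h1.card_pos; have := h2.card_pos; omega
    obtain ⟨i1, hi1⟩ := Finset.card_eq_one.mp hc1
    obtain ⟨i2, hi2⟩ := Finset.card_eq_one.mp hc2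
    apply hW
    rw [hMW, projW, hi1, hi2, centerProj_singleton, centerProj_singleton, add_zero, Matrix.zero_mul]
  have hm : (0:ℝ) < N - 2 := by
    rw [hN]
    have : (3:ℝ) ≤ (C1.card : ℝ) + (C2.card : ℝ) := by exact_mod_cast hcard
    linarith
  have hNR : N - 2 + R = (N - 2) * (a + b) / b := by
    rw [hR]; field_simp; ring
  have hfrac1 : R / (N - 2 + R) = a / (a + b) := by
    rw [hNR, hR]
    field_simp [hm.ne', hb.ne', hab.ne']
  have hfrac2 : (N - 2) / (N - 2 + R) = b / (a + b) := by
    rw [hNR]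
    field_simp [hm.ne', hb.ne', hab.ne']
  have hsa : Real.sqrt a ≠ 0 := (Real.sqrt_pos.mpr ha).ne'
  have hsb : Real.sqrt b ≠ 0 := (Real.sqrt_pos.mpr hb).ne'
  have hsab : Real.sqrt (a + b) ≠ 0 := (Real.sqrt_pos.mpr hab).ne'
  have he1 : Real.sqrt Δ * (Real.sqrt (a / (a + b)) * (Real.sqrt a)⁻¹) = 1 := by
    rw [hΔ, Real.sqrt_div ha.le]
    field_simp
  have he2 : Real.sqrt Δ * (Real.sqrt (b / (a + b)) * (Real.sqrt b)⁻¹) = 1 := by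
    rw [hΔ, Real.sqrt_div hb.le]
    field_simp
  rw [hfrac1, hfrac2, hη, hγ, hΓ, Matrix.sub_mul, Matrix.sub_mul, Matrix.one_mul]
  simp only [smul_add, smul_smul, ← hMB, ← hMW, he1, he2, one_smul]
  abel
end
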